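/- Let σ : ℝⁿ → ℝ be convex and Lipschitz, let H : [0,T] × ℝⁿ → ℝ be continuous, let D = dom σ* (a bounded set), and set M = sup_{τ ∈ [0,T], p ∈ D} |H_t(τ,p)| assuming H ∈ C¹ with this supremum finite. Define u(t,x) = max_{q ∈ D} (⟨x,q⟩ − σ*(q) − ∫₀^t H(τ,q)dτ). Then for all (t₁,x₁), (t₂,x₂) ∈ [0,T] × ℝⁿ and λ ∈ [0,1], u(λ(t₁,x₁) + (1−λ)(t₂,x₂)) ≤ λ u(t₁,x₁) + (1−λ) u(t₂,x₂) + λ(1−λ) M |t₁ − t₂|². In particular u is semiconvex with linear modulus on [0,T] × ℝⁿ. -/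

import Mathlib

open scoped RealInnerProductSpace

/-- Effective domain of the Fenchel conjugate of `σ`. -/
def fenchelDom {n : ℕ} (σ : EuclideanSpace ℝ (Fin n) → ℝ) :
    Set (EuclideanSpace ℝ (Fin n)) :=
  {q | BddAbove (Set.range fun x => ⟪x, q⟫ - σ x)}

/-- The Fenchel conjugate (as a real supremum; used on its effective domain). -/
noncomputable def fenchelConj {n : ℕ} (σ : EuclideanSpace ℝ (Fin n) → ℝ)
    (q : EuclideanSpace ℝ (Fin n)) : ℝ :=
  ⨆ x, (⟪x, q⟫ - σ x)

/-- The Hopf-type formula `u(t,x) = max_{q ∈ dom σ*} (⟨x,q⟩ − σ*(q) − ∫₀ᵗ H(τ,q)dτ)`. -/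
noncomputable def hopfU {n : ℕ} (σ : EuclideanSpace ℝ (Fin n) → ℝ)
    (H : ℝ → EuclideanSpace ℝ (Fin n) → ℝ) (t : ℝ) (x : EuclideanSpace ℝ (Fin n)) : ℝ :=
  sSup {r : ℝ | ∃ q ∈ fenchelDom σ,
    r = ⟪x, q⟫ - fenchelConj σ q - ∫ τ in (0:ℝ)..t, H τ q}

section AuxLemmas

open Set MeasureTheory intervalIntegral

variable {n : ℕ}

/-- The domain of the Fenchel conjugate of a convex Lipschitz function is nonempty. -/
lemma fenchelDom_nonempty (σ : EuclideanSpace ℝ (Fin n) → ℝ)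
    (hconv : ConvexOn ℝ Set.univ σ) (L : NNReal) (hlip : LipschitzWith L σ) :
    (fenchelDom σ).Nonempty := by
  have hvol : (volume : Measure (EuclideanSpace ℝ (Fin n))) ≠ 0 :=
    Measure.measure_univ_pos.mp (isOpen_univ.measure_pos volume Set.univ_nonempty)
  haveI : (ae (volume : Measure (EuclideanSpace ℝ (Fin n)))).NeBot := ae_neBot.2 hvol
  obtain ⟨x₀, hx₀⟩ : ∃ x, DifferentiableAt ℝ σ x :=
    (hlip.ae_differentiableAt (μ := (volume : Measure (EuclideanSpace ℝ (Fin n))))).exists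
  set ℓ := fderiv ℝ σ x₀ with hℓ
  set q := (InnerProductSpace.toDual ℝ (EuclideanSpace ℝ (Fin n))).symm ℓ with hqdef
  have hqx : ∀ x, ⟪x, q⟫ = ℓ x := by
    intro x
    rw [real_inner_comm]
    exact InnerProductSpace.toDual_symm_apply
  have key : ∀ x, ℓ (x - x₀) ≤ σ x - σ x₀ := by
    intro x
    set φ : ℝ → ℝ := fun s => σ (s • (x - x₀) + x₀) with hφ
    have hφconv : ConvexOn ℝ Set.univ φ := by
      have h := hconv.comp_affineMap (AffineMap.lineMap x₀ x : ℝ →ᵃ[ℝ] _)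
      have : (AffineMap.lineMap x₀ x : ℝ →ᵃ[ℝ] _) ⁻¹' Set.univ = Set.univ := by simp
      rw [this] at h
      have heq : φ = σ ∘ (AffineMap.lineMap x₀ x : ℝ →ᵃ[ℝ] _) := by
        funext s
        simp [hφ, Function.comp, AffineMap.lineMap_apply]
      rw [heq]
      exact h
    have hderiv : HasDerivAt φ (ℓ (x - x₀)) 0 := by
      have h1 : HasDerivAt (fun s : ℝ => s • (x - x₀) + x₀) (x - x₀) 0 := by
        simpa using ((hasDerivAt_id (0 : ℝ)).smul_const (x - x₀)).add_const x₀
      have h0 : (0 : ℝ) • (x - x₀) + x₀ = x₀ := by simp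
      have h2 : HasFDerivAt σ ℓ ((0 : ℝ) • (x - x₀) + x₀) := by
        rw [h0]; exact hx₀.hasFDerivAt
      exact h2.comp_hasDerivAt 0 h1
    have hslope := hφconv.le_slope_of_hasDerivAt (Set.mem_univ (0 : ℝ))
      (Set.mem_univ (1 : ℝ)) one_pos hderiv
    have hs : slope φ 0 1 = σ x - σ x₀ := by
      simp [slope_def_field, hφ]
    rw [hs] at hslope
    exact hslope
  refine ⟨q, ⟨ℓ x₀ - σ x₀, ?_⟩⟩
  rintro r ⟨x, rfl⟩
  have := key x
  rw [map_sub] at this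
  simp only [hqx]
  linarith

/-- Fenchel–Young: on the domain, `⟪x,q⟫ - σ*(q) ≤ σ x`. -/
lemma fenchelYoung (σ : EuclideanSpace ℝ (Fin n) → ℝ) {q : EuclideanSpace ℝ (Fin n)}
    (hq : q ∈ fenchelDom σ) (x : EuclideanSpace ℝ (Fin n)) :
    ⟪x, q⟫ - fenchelConj σ q ≤ σ x := by
  have h : ⟪x, q⟫ - σ x ≤ fenchelConj σ q := le_ciSup hq x
  linarith

/-- The domain of the Fenchel conjugate is contained in the ball of radius `L`. -/
lemma fenchelDom_subset_ball (σ : EuclideanSpace ℝ (Fin n) → ℝ)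
    (L : NNReal) (hlip : LipschitzWith L σ) {q : EuclideanSpace ℝ (Fin n)}
    (hq : q ∈ fenchelDom σ) : ‖q‖ ≤ L := by
  by_contra h
  push_neg at h
  obtain ⟨b, hb⟩ := hq
  have hLq : (0:ℝ) ≤ ‖q‖ - L := by
    have : (0:ℝ) ≤ (L : ℝ) := L.coe_nonneg
    linarith
  have hq0 : (0:ℝ) < ‖q‖ := lt_of_le_of_lt L.coe_nonneg h
  set s : ℝ := (|b + σ 0| + 1) / (‖q‖ * (‖q‖ - L)) with hs
  have hden : (0:ℝ) < ‖q‖ * (‖q‖ - L) := mul_pos hq0 (by linarith)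
  have hs0 : 0 ≤ s := div_nonneg (by positivity) hden.le
  have hbound := hb (Set.mem_range_self (s • q))
  have hinner : ⟪s • q, q⟫ = s * ‖q‖ ^ 2 := by
    rw [real_inner_smul_left, real_inner_self_eq_norm_sq]
  have hσ : σ (s • q) ≤ σ 0 + L * (s * ‖q‖) := by
    have := hlip.dist_le_mul (s • q) 0
    rw [Real.dist_eq, dist_zero_right] at this
    have habs : |σ (s • q) - σ 0| ≤ L * ‖s • q‖ := this
    have hnorm : ‖s • q‖ = s * ‖q‖ := by
      rw [norm_smul, Real.norm_eq_abs, abs_of_nonneg hs0]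
    rw [hnorm] at habs
    linarith [(abs_le.mp habs).2]
  have hineq : s * ‖q‖ * (‖q‖ - L) ≤ b + σ 0 := by
    have : ⟪s • q, q⟫ - σ (s • q) ≤ b := hbound
    rw [hinner] at this
    nlinarith
  have hval : s * (‖q‖ * (‖q‖ - L)) = |b + σ 0| + 1 := by
    rw [hs]; field_simp
  nlinarith [abs_nonneg (b + σ 0), le_abs_self (b + σ 0)]

end AuxLemmas

/-- Semiconvexity of the Hopf-type formula: the solution satisfies
`u(λy₁+(1−λ)y₂) ≤ λu(y₁)+(1−λ)u(y₂)+λ(1−λ)M|t₁−t₂|²` where `M` bounds `|H_t|`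
on `[0,T] × dom σ*`; in particular `u` is semiconvex with linear modulus. -/
theorem stmt5 {n : ℕ} (T : ℝ) (hT : 0 < T)
    (σ : EuclideanSpace ℝ (Fin n) → ℝ) (hconv : ConvexOn ℝ Set.univ σ)
    (L : NNReal) (hlip : LipschitzWith L σ)
    (H : ℝ → EuclideanSpace ℝ (Fin n) → ℝ)
    (hH : ContDiff ℝ 1 fun p : ℝ × EuclideanSpace ℝ (Fin n) => H p.1 p.2)
    (M : ℝ)
    (hM : ∀ τ ∈ Set.Icc (0:ℝ) T, ∀ p ∈ fenchelDom σ, |deriv (fun s => H s p) τ| ≤ M) :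
    (∀ y₁ y₂ : ℝ × EuclideanSpace ℝ (Fin n), y₁.1 ∈ Set.Icc (0:ℝ) T →
      y₂.1 ∈ Set.Icc (0:ℝ) T → ∀ lam ∈ Set.Icc (0:ℝ) 1,
      hopfU σ H (lam • y₁ + (1 - lam) • y₂).1 (lam • y₁ + (1 - lam) • y₂).2 ≤
        lam * hopfU σ H y₁.1 y₁.2 + (1 - lam) * hopfU σ H y₂.1 y₂.2 +
          lam * (1 - lam) * M * |y₁.1 - y₂.1| ^ 2) ∧
    (∃ C > 0, ∀ y₁ y₂ : ℝ × EuclideanSpace ℝ (Fin n), y₁.1 ∈ Set.Icc (0:ℝ) T →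
      y₂.1 ∈ Set.Icc (0:ℝ) T → ∀ lam ∈ Set.Icc (0:ℝ) 1,
      hopfU σ H (lam • y₁ + (1 - lam) • y₂).1 (lam • y₁ + (1 - lam) • y₂).2 -
          lam * hopfU σ H y₁.1 y₁.2 - (1 - lam) * hopfU σ H y₂.1 y₂.2 ≤
        lam * (1 - lam) * (C / 2) * ‖y₁ - y₂‖ ^ 2) := by
  classical
  obtain ⟨q₀, hq₀⟩ := fenchelDom_nonempty σ hconv L hlip
  -- `M` is nonnegative
  have hM0 : 0 ≤ M := le_trans (abs_nonneg _) (hM 0 ⟨le_rfl, hT.le⟩ q₀ hq₀)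
  -- continuity of `H`
  have hHc : Continuous fun p : ℝ × EuclideanSpace ℝ (Fin n) => H p.1 p.2 := hH.continuous
  have hHq : ∀ q, Continuous fun τ => H τ q := fun q =>
    hHc.comp (continuous_id.prodMk continuous_const)
  -- a uniform bound `K` for `|H|` on `[0,T] × closedBall 0 L`
  obtain ⟨K₀, hK₀⟩ : ∃ C, ∀ p ∈ (Set.Icc (0:ℝ) T) ×ˢ Metric.closedBall (0 : EuclideanSpace ℝ (Fin n)) L,
      ‖H p.1 p.2‖ ≤ C := by
    have hcomp : IsCompact ((Set.Icc (0:ℝ) T) ×ˢ Metric.closedBall (0 : EuclideanSpace ℝ (Fin n)) L) :=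
      (isCompact_Icc).prod (isCompact_closedBall _ _)
    exact hcomp.exists_bound_of_continuousOn hHc.continuousOn
  set K : ℝ := max K₀ 0 with hKdef
  have hK0 : 0 ≤ K := le_max_right _ _
  have hK : ∀ τ ∈ Set.Icc (0:ℝ) T, ∀ q ∈ fenchelDom σ, |H τ q| ≤ K := by
    intro τ hτ q hq
    have hqL : q ∈ Metric.closedBall (0 : EuclideanSpace ℝ (Fin n)) L := by
      rw [Metric.mem_closedBall, dist_zero_right]
      exact fenchelDom_subset_ball σ L hlip hq
    exact le_trans (hK₀ (τ, q) ⟨hτ, hqL⟩) (le_max_left _ _)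
  -- bound on the integral
  have hint_bound : ∀ t ∈ Set.Icc (0:ℝ) T, ∀ q ∈ fenchelDom σ,
      |∫ τ in (0:ℝ)..t, H τ q| ≤ K * T := by
    intro t ht q hq
    have h1 : ∀ x ∈ Set.uIoc (0:ℝ) t, ‖H x q‖ ≤ K := by
      intro x hx
      rw [Set.uIoc_of_le ht.1] at hx
      exact hK x ⟨hx.1.le, hx.2.trans ht.2⟩ q hq
    have := intervalIntegral.norm_integral_le_of_norm_le_const h1
    rw [Real.norm_eq_abs] at this
    calc |∫ τ in (0:ℝ)..t, H τ q| ≤ K * |t - 0| := this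
      _ ≤ K * T := by
          rw [sub_zero, abs_of_nonneg ht.1]
          exact mul_le_mul_of_nonneg_left ht.2 hK0
  -- the defining set of `hopfU` is bounded above
  have hbddS : ∀ t ∈ Set.Icc (0:ℝ) T, ∀ x, BddAbove {r : ℝ | ∃ q ∈ fenchelDom σ,
      r = ⟪x, q⟫ - fenchelConj σ q - ∫ τ in (0:ℝ)..t, H τ q} := by
    intro t ht x
    refine ⟨σ x + K * T, ?_⟩
    rintro r ⟨q, hq, rfl⟩
    have h1 := fenchelYoung σ hq x
    have h2 := hint_bound t ht q hq
    have := (abs_le.mp h2).1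
    linarith
  -- the key per-`q` convexity estimate for the time integral
  have hcore : ∀ q ∈ fenchelDom σ, ∀ t₁ ∈ Set.Icc (0:ℝ) T, ∀ t₂ ∈ Set.Icc (0:ℝ) T,
      ∀ lam ∈ Set.Icc (0:ℝ) 1,
      -(∫ τ in (0:ℝ)..(lam * t₁ + (1 - lam) * t₂), H τ q) ≤
        lam * (-(∫ τ in (0:ℝ)..t₁, H τ q)) + (1 - lam) * (-(∫ τ in (0:ℝ)..t₂, H τ q)) +
          lam * (1 - lam) * M * (t₁ - t₂) ^ 2 := by
    intro q hq t₁ ht₁ t₂ ht₂ lam hlam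
    set f : ℝ → ℝ := fun t => ∫ τ in (0:ℝ)..t, H τ q with hfdef
    have hf : ∀ t, HasDerivAt f (H t q) t := by
      intro t
      exact intervalIntegral.integral_hasDerivAt_right
        ((hHq q).intervalIntegrable 0 t)
        ((hHq q).stronglyMeasurableAtFilter _ _)
        (hHq q).continuousAt
    have hHdiff : Differentiable ℝ (fun s => H s q) :=
      (hH.differentiable one_ne_zero).comp (differentiable_id.prodMk (differentiable_const q))
    set g : ℝ → ℝ := fun t => M / 2 * t ^ 2 - f t with hgdef
    set g' : ℝ → ℝ := fun t => M * t - H t q with hg'def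
    have hg' : ∀ t, HasDerivAt g (g' t) t := by
      intro t
      have h1 := ((hasDerivAt_pow 2 t).const_mul (M / 2)).sub (hf t)
      refine h1.congr_deriv ?_
      simp [hg'def]
      ring
    have hg'' : ∀ t, HasDerivAt g' (M - deriv (fun s => H s q) t) t := by
      intro t
      have h1 := ((hasDerivAt_id t).const_mul M).sub ((hHdiff t).hasDerivAt)
      refine h1.congr_deriv ?_
      ring
    have hgconv : ConvexOn ℝ (Set.Icc 0 T) g := by
      apply convexOn_of_hasDerivWithinAt2_nonneg (convex_Icc 0 T)
        (f' := g') (f'' := fun t => M - deriv (fun s => H s q) t)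
      · exact fun t _ => ((hg' t).differentiableAt.continuousAt).continuousWithinAt
      · exact fun t _ => (hg' t).hasDerivWithinAt
      · exact fun t _ => (hg'' t).hasDerivWithinAt
      · intro t ht
        rw [interior_Icc] at ht
        have := hM t ⟨ht.1.le, ht.2.le⟩ q hq
        linarith [(abs_le.mp this).2]
    have hcomb := hgconv.2 ht₁ ht₂ hlam.1 (by linarith [hlam.2] : (0:ℝ) ≤ 1 - lam)
      (by ring)
    simp only [smul_eq_mul] at hcomb
    have hgm : g (lam * t₁ + (1 - lam) * t₂) ≤ lam * g t₁ + (1 - lam) * g t₂ := hcomb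
    have hms : M / 2 * (lam * (1 - lam)) * (t₁ - t₂) ^ 2 ≤
        M * (lam * (1 - lam)) * (t₁ - t₂) ^ 2 := by
      nlinarith [mul_nonneg (mul_nonneg hlam.1 (by linarith [hlam.2] : (0:ℝ) ≤ 1 - lam))
        (sq_nonneg (t₁ - t₂))]
    simp only [hgdef] at hgm
    nlinarith [hgm, hms]
  -- the main estimate
  have main : ∀ y₁ y₂ : ℝ × EuclideanSpace ℝ (Fin n), y₁.1 ∈ Set.Icc (0:ℝ) T →
      y₂.1 ∈ Set.Icc (0:ℝ) T → ∀ lam ∈ Set.Icc (0:ℝ) 1,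
      hopfU σ H (lam • y₁ + (1 - lam) • y₂).1 (lam • y₁ + (1 - lam) • y₂).2 ≤
        lam * hopfU σ H y₁.1 y₁.2 + (1 - lam) * hopfU σ H y₂.1 y₂.2 +
          lam * (1 - lam) * M * |y₁.1 - y₂.1| ^ 2 := by
    intro y₁ y₂ ht₁ ht₂ lam hlam
    obtain ⟨t₁, x₁⟩ := y₁
    obtain ⟨t₂, x₂⟩ := y₂
    simp only [Prod.fst_add, Prod.snd_add, Prod.smul_fst, Prod.smul_snd, smul_eq_mul] at *
    have hlam' : (0:ℝ) ≤ 1 - lam := by linarith [hlam.2]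
    have hmid : lam * t₁ + (1 - lam) * t₂ ∈ Set.Icc (0:ℝ) T := by
      constructor
      · nlinarith [ht₁.1, ht₂.1, hlam.1]
      · nlinarith [ht₁.2, ht₂.2, hlam.1]
    rw [sq_abs]
    simp only [hopfU]
    apply csSup_le
    · exact ⟨_, q₀, hq₀, rfl⟩
    rintro r ⟨q, hq, rfl⟩
    have h₁ : ⟪x₁, q⟫ - fenchelConj σ q - ∫ τ in (0:ℝ)..t₁, H τ q ≤ hopfU σ H t₁ x₁ :=
      le_csSup (hbddS t₁ ht₁ x₁) ⟨q, hq, rfl⟩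
    have h₂ : ⟪x₂, q⟫ - fenchelConj σ q - ∫ τ in (0:ℝ)..t₂, H τ q ≤ hopfU σ H t₂ x₂ :=
      le_csSup (hbddS t₂ ht₂ x₂) ⟨q, hq, rfl⟩
    simp only [hopfU] at h₁ h₂
    have hint := hcore q hq t₁ ht₁ t₂ ht₂ lam hlam
    have hinner : ⟪lam • x₁ + (1 - lam) • x₂, q⟫ = lam * ⟪x₁, q⟫ + (1 - lam) * ⟪x₂, q⟫ := by
      rw [inner_add_left, real_inner_smul_left, real_inner_smul_left]
    rw [hinner]
    have hm1 := mul_le_mul_of_nonneg_left h₁ hlam.1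
    have hm2 := mul_le_mul_of_nonneg_left h₂ hlam'
    linarith
  refine ⟨main, ⟨2 * (M + 1), by linarith, ?_⟩⟩
  intro y₁ y₂ ht₁ ht₂ lam hlam
  have h := main y₁ y₂ ht₁ ht₂ lam hlam
  have hlam' : (0:ℝ) ≤ 1 - lam := by linarith [hlam.2]
  have habs : |y₁.1 - y₂.1| ≤ ‖y₁ - y₂‖ := by
    have := norm_fst_le (y₁ - y₂)
    simpa [Real.norm_eq_abs] using this
  have hsq : |y₁.1 - y₂.1| ^ 2 ≤ ‖y₁ - y₂‖ ^ 2 := by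
    have h0 : (0:ℝ) ≤ |y₁.1 - y₂.1| := abs_nonneg _
    nlinarith
  have hfinal : lam * (1 - lam) * M * |y₁.1 - y₂.1| ^ 2 ≤
      lam * (1 - lam) * ((2 * (M + 1)) / 2) * ‖y₁ - y₂‖ ^ 2 := by
    have hll : (0:ℝ) ≤ lam * (1 - lam) := mul_nonneg hlam.1 hlam'
    have hnn : (0:ℝ) ≤ ‖y₁ - y₂‖ ^ 2 := sq_nonneg _
    have e1 := mul_le_mul_of_nonneg_left hsq (mul_nonneg hll hM0)
    have e2 := mul_nonneg hll hnn
    nlinarith [e1, e2]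
  linarith
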